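/- arXiv:1410.4744 — 4 statements merged into one kernel-verified Lean document; each statement's English description precedes it below -/
import Mathlib

section
/- Let μ > 0, L > 0, α > 0, and ρ ∈ (0, 1). Define h̃ = sqrt( ((1 + ρ)/(ρμ))² + 1/(4μαL) ) − (1 + ρ)/(ρμ), and M(h) = (1/(hμ) + 4hLα)/(ρ − 4hLα(1 + ρ)) for h ∈ (0, ρ/(4Lα(1 + ρ))). Then h̃ lies in the open interval (0, ρ/(4Lα(1 + ρ))), and h̃ is the unique global minimizer of M on this interval: M(h̃) ≤ M(h) for all h ∈ (0, ρ/(4Lα(1 + ρ))), with equality only at h = h̃. -/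
set_option maxHeartbeats 1000000

/-- The stepsize `h̃ = sqrt(((1+ρ)/(ρμ))² + 1/(4μαL)) − (1+ρ)/(ρμ)` lies in the open interval
`(0, ρ/(4Lα(1+ρ)))`, and it is the unique global minimizer of
`M(h) = (1/(hμ) + 4hLα)/(ρ − 4hLα(1+ρ))` on that interval. -/

theorem mS2GD_optimal_stepsize (μ L α ρ : ℝ)
    (hμ : 0 < μ) (hL : 0 < L) (hα : 0 < α) (hρ0 : 0 < ρ) (hρ1 : ρ < 1) :
    let ht : ℝ := Real.sqrt (((1 + ρ) / (ρ * μ)) ^ 2 + 1 / (4 * μ * α * L)) - (1 + ρ) / (ρ * μ)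
    let M : ℝ → ℝ := fun h => (1 / (h * μ) + 4 * h * L * α) / (ρ - 4 * h * L * α * (1 + ρ))
    (0 < ht ∧ ht < ρ / (4 * L * α * (1 + ρ))) ∧
    (∀ h : ℝ, 0 < h → h < ρ / (4 * L * α * (1 + ρ)) → M ht ≤ M h) ∧
    (∀ h : ℝ, 0 < h → h < ρ / (4 * L * α * (1 + ρ)) → M h = M ht → h = ht) := by
  intro ht M
  set c : ℝ := (1 + ρ) / (ρ * μ) with hc
  have hcpos : 0 < c := by positivity
  have hsqgt : c < Real.sqrt (c ^ 2 + 1 / (4 * μ * α * L)) := by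
    nlinarith [Real.sq_sqrt (show (0:ℝ) ≤ c ^ 2 + 1 / (4 * μ * α * L) by positivity),
      Real.sqrt_nonneg (c ^ 2 + 1 / (4 * μ * α * L)), hcpos,
      (show (0:ℝ) < 1 / (4 * μ * α * L) by positivity)]
  have hht0 : 0 < ht := by simp only [ht]; linarith
  have hsqsq : (ht + c) ^ 2 = c ^ 2 + 1 / (4 * μ * α * L) := by
    have h2 : ht + c = Real.sqrt (c ^ 2 + 1 / (4 * μ * α * L)) := by simp only [ht, hc]; ring
    rw [h2, Real.sq_sqrt (by positivity)]
  have h1 : ht ^ 2 + 2 * c * ht = 1 / (4 * μ * α * L) := by nlinarith [hsqsq]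
  have hc' : μ * ρ * c = 1 + ρ := by rw [hc]; field_simp
  have h2 : (4 * μ * α * L * ρ) * (ht ^ 2 + 2 * c * ht) = ρ := by
    rw [h1]; field_simp
  have E : 4 * μ * α * L * ρ * ht ^ 2 + 8 * α * L * (1 + ρ) * ht = ρ := by
    linear_combination h2 - 8 * α * L * ht * hc'
  have hhtb : ht < ρ / (4 * L * α * (1 + ρ)) := by
    rw [lt_div_iff₀ (by positivity)]
    nlinarith [E, mul_pos hht0 (mul_pos hL hα), sq_nonneg ht]
  have denom : ∀ h : ℝ, h < ρ / (4 * L * α * (1 + ρ)) → 0 < ρ - 4 * h * L * α * (1 + ρ) := by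
    intro h hb
    rw [lt_div_iff₀ (by positivity)] at hb
    nlinarith
  have strict : ∀ h : ℝ, 0 < h → h < ρ / (4 * L * α * (1 + ρ)) → h ≠ ht → M ht < M h := by
    intro h hp hb hne
    have hd := denom h hb
    have hdt := denom ht hhtb
    have hsq2 : 0 < (h - ht) ^ 2 := by
      have : h - ht ≠ 0 := sub_ne_zero.mpr hne
      positivity
    show (1 / (ht * μ) + 4 * ht * L * α) / (ρ - 4 * ht * L * α * (1 + ρ)) <
      (1 / (h * μ) + 4 * h * L * α) / (ρ - 4 * h * L * α * (1 + ρ))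
    rw [div_lt_div_iff₀ hdt hd]
    have key : μ * h * ht * ((1 / (h * μ) + 4 * h * L * α) * (ρ - 4 * ht * L * α * (1 + ρ))
        - (1 / (ht * μ) + 4 * ht * L * α) * (ρ - 4 * h * L * α * (1 + ρ)))
        = (h - ht) ^ 2 * (4 * μ * L * α * ρ * ht + 4 * L * α * (1 + ρ)) := by
      have e1 : μ * h * ht * (1 / (h * μ)) = ht := by
        rw [mul_one_div, div_eq_iff (mul_ne_zero hp.ne' hμ.ne')]; ring
      have e2 : μ * h * ht * (1 / (ht * μ)) = h := by
        rw [mul_one_div, div_eq_iff (mul_ne_zero hht0.ne' hμ.ne')]; ring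
      linear_combination (ρ - 4 * ht * L * α * (1 + ρ)) * e1 - (ρ - 4 * h * L * α * (1 + ρ)) * e2
        + (h - ht) * E
    have h3 : 0 < μ * h * ht := by positivity
    have h4 : 0 < (h - ht) ^ 2 * (4 * μ * L * α * ρ * ht + 4 * L * α * (1 + ρ)) :=
      mul_pos hsq2 (by positivity)
    have h5 : 0 < μ * h * ht * ((1 / (h * μ) + 4 * h * L * α) * (ρ - 4 * ht * L * α * (1 + ρ))
        - (1 / (ht * μ) + 4 * ht * L * α) * (ρ - 4 * h * L * α * (1 + ρ))) := key ▸ h4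
    have h6 : 0 < (1 / (h * μ) + 4 * h * L * α) * (ρ - 4 * ht * L * α * (1 + ρ))
        - (1 / (ht * μ) + 4 * ht * L * α) * (ρ - 4 * h * L * α * (1 + ρ)) := by
      by_contra hc2
      push_neg at hc2
      nlinarith [mul_nonpos_of_nonneg_of_nonpos h3.le hc2]
    linarith
  refine ⟨⟨hht0, hhtb⟩, ?_, ?_⟩
  · intro h hp hb
    rcases eq_or_ne h ht with rfl | hne
    · exact le_refl _
    · exact (strict h hp hb hne).le
  · intro h hp hb heq
    by_contra hne
    exact absurd heq (strict h hp hb hne).ne'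
end

section
/- Let μ > 0, L > 0, α > 0, and ρ ∈ (0, 1). With h̃ = sqrt( ((1 + ρ)/(ρμ))² + 1/(4μαL) ) − (1 + ρ)/(ρμ) and M(h) = (1/(hμ) + 4hLα)/(ρ − 4hLα(1 + ρ)), the minimal inner-loop length equals M(h̃) = 8αL(1 + ρ + sqrt( μρ²/(4αL) + (1 + ρ)² ))/(μρ²). -/
/-- The minimal inner-loop length of mS2GD at the optimal stepsize
`h̃ = sqrt(((1+ρ)/(ρμ))² + 1/(4μαL)) − (1+ρ)/(ρμ)` equals
`M(h̃) = 8αL(1 + ρ + sqrt(μρ²/(4αL) + (1+ρ)²))/(μρ²)`, where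
`M(h) = (1/(hμ) + 4hLα)/(ρ − 4hLα(1+ρ))`. -/
theorem mS2GD_optimal_inner_loop_value (μ L α ρ : ℝ)
    (hμ : 0 < μ) (hL : 0 < L) (hα : 0 < α) (hρ0 : 0 < ρ) (hρ1 : ρ < 1) :
    let ht : ℝ := Real.sqrt (((1 + ρ) / (ρ * μ)) ^ 2 + 1 / (4 * μ * α * L)) - (1 + ρ) / (ρ * μ)
    (1 / (ht * μ) + 4 * ht * L * α) / (ρ - 4 * ht * L * α * (1 + ρ))
      = 8 * α * L * (1 + ρ + Real.sqrt (μ * ρ ^ 2 / (4 * α * L) + (1 + ρ) ^ 2)) /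
          (μ * ρ ^ 2) := by
  intro ht
  set a := (1 + ρ) / (ρ * μ) with ha
  set c := 1 / (4 * μ * α * L) with hc
  have hρμ : 0 < ρ * μ := by positivity
  have ha0 : 0 < a := by positivity
  have hc0 : 0 < c := by positivity
  set s := Real.sqrt (a ^ 2 + c) with hs
  have hs2 : s ^ 2 = a ^ 2 + c := Real.sq_sqrt (by positivity)
  have hs0 : 0 ≤ s := Real.sqrt_nonneg _
  have hsa : a < s := by nlinarith
  have hht : ht = s - a := rfl
  have hcm : 4 * μ * α * L * c = 1 := by
    rw [hc]; field_simp
  have hsqrtR : Real.sqrt (μ * ρ ^ 2 / (4 * α * L) + (1 + ρ) ^ 2) = ρ * μ * s := by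
    rw [hs, ← Real.sqrt_sq hρμ.le, ← Real.sqrt_mul (by positivity)]
    congr 1
    rw [ha, hc]
    field_simp
    ring
  have hden : ρ - 4 * ht * L * α * (1 + ρ) = ρ * s * (s - a) / c := by
    rw [hht]
    have h1ρ : 1 + ρ = ρ * μ * a := by rw [ha]; field_simp
    field_simp
    rw [h1ρ]
    linear_combination (-(ρ * a * (s - a))) * hcm + (-ρ) * hs2
  clear_value ht s c a
  have hnum : 1 / (ht * μ) + 4 * ht * L * α = 2 * s / (μ * c) := by
    rw [hht]
    have hne : s - a ≠ 0 := by linarith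
    field_simp
    linear_combination ((s - a) ^ 2) * hcm + (-1) * hs2
  rw [hden, hnum, hsqrtR]
  have h1ρ : 1 + ρ = ρ * μ * a := by rw [ha]; field_simp
  rw [h1ρ]
  have hne : s - a ≠ 0 := by linarith
  have hsne : s ≠ 0 := by linarith
  field_simp
  linear_combination (-2) * hcm + (-(8 * μ * α * L)) * hs2
end

section
/- Let μ > 0, L > 0, α > 0, and ρ ∈ (0, 1), and define h̃ = sqrt( ((1 + ρ)/(ρμ))² + 1/(4μαL) ) − (1 + ρ)/(ρμ) and M(h) = (1/(hμ) + 4hLα)/(ρ − 4hLα(1 + ρ)). Then M is strictly decreasing on the interval (0, h̃]: for 0 < h₁ < h₂ ≤ h̃ one has M(h₁) > M(h₂). -/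
/-- The map `M(h) = (1/(hμ) + 4hLα)/(ρ − 4hLα(1+ρ))` is strictly decreasing on `(0, h̃]`,
where `h̃ = sqrt(((1+ρ)/(ρμ))² + 1/(4μαL)) − (1+ρ)/(ρμ)`. -/
theorem mS2GD_M_strictly_decreasing (μ L α ρ : ℝ)
    (hμ : 0 < μ) (hL : 0 < L) (hα : 0 < α) (hρ0 : 0 < ρ) (hρ1 : ρ < 1) :
    let ht : ℝ := Real.sqrt (((1 + ρ) / (ρ * μ)) ^ 2 + 1 / (4 * μ * α * L)) - (1 + ρ) / (ρ * μ)
    let M : ℝ → ℝ := fun h => (1 / (h * μ) + 4 * h * L * α) / (ρ - 4 * h * L * α * (1 + ρ))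
    ∀ h₁ h₂ : ℝ, 0 < h₁ → h₁ < h₂ → h₂ ≤ ht → M h₂ < M h₁ := by
  intro ht M h₁ h₂ hh1 h12 h2t
  have hρμ : 0 < ρ * μ := mul_pos hρ0 hμ
  obtain ⟨a, ha⟩ : ∃ a : ℝ, a = (1 + ρ) / (ρ * μ) := ⟨_, rfl⟩
  have ha0 : 0 < a := ha ▸ div_pos (by linarith) hρμ
  have haμρ : a * (ρ * μ) = 1 + ρ := by
    rw [ha]; field_simp
  have h4 : (0:ℝ) < 4 * μ * α * L := by positivity
  have hnn : (0:ℝ) ≤ a ^ 2 + 1 / (4 * μ * α * L) := by positivity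
  have hEdiv : ht ^ 2 + 2 * a * ht = 1 / (4 * μ * α * L) := by
    have hs2 : Real.sqrt (a ^ 2 + 1 / (4 * μ * α * L)) ^ 2
        = a ^ 2 + 1 / (4 * μ * α * L) := Real.sq_sqrt hnn
    have hhtdef : ht = Real.sqrt (a ^ 2 + 1 / (4 * μ * α * L)) - a := by
      show ht = _ - a
      rw [ha]
    rw [hhtdef]; nlinarith [hs2]
  clear_value ht
  have hE : 4 * μ * α * L * ht ^ 2 + 8 * μ * α * L * a * ht = 1 := by
    have := congrArg (fun x => 4 * μ * α * L * x) hEdiv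
    field_simp at this
    linarith
  have hht0 : 0 < ht := lt_of_lt_of_le (lt_trans hh1 h12) h2t
  have hh2 : 0 < h₂ := lt_trans hh1 h12
  have h1t : h₁ ≤ ht := le_of_lt (lt_of_lt_of_le h12 h2t)
  have hhalf : 4 * μ * α * L * a * ht < 1 / 2 := by
    nlinarith [mul_pos h4 (pow_pos hht0 2)]
  -- Denominators positive
  have hD : ∀ h : ℝ, 0 < h → h ≤ ht → 0 < ρ - 4 * h * L * α * (1 + ρ) := by
    intro h hh hle
    have heq : 4 * h * L * α * (1 + ρ) = ρ * (4 * μ * α * L * a * h) := by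
      rw [← haμρ]; ring
    rw [heq]
    have h1 : 4 * μ * α * L * a * h ≤ 4 * μ * α * L * a * ht := by
      apply mul_le_mul_of_nonneg_left hle; positivity
    nlinarith [mul_lt_mul_of_pos_left (lt_of_le_of_lt h1 hhalf) hρ0]
  have hD1 : 0 < ρ - 4 * h₁ * L * α * (1 + ρ) := hD h₁ hh1 h1t
  have hD2 : 0 < ρ - 4 * h₂ * L * α * (1 + ρ) := hD h₂ hh2 h2t
  -- key positivity
  have hkey : 0 < 1 - 4 * μ * α * L * (h₁ * h₂ + a * (h₁ + h₂)) := by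
    have hp : h₁ * h₂ + a * (h₁ + h₂) < ht ^ 2 + 2 * a * ht := by
      nlinarith [mul_le_mul h2t (le_of_lt h12) (le_of_lt hh1) (le_of_lt hht0),
        mul_lt_mul_of_pos_left (lt_of_lt_of_le h12 h2t) ha0,
        mul_le_mul_of_nonneg_left h2t (le_of_lt ha0)]
    nlinarith [mul_lt_mul_of_pos_left hp h4]
  show M h₂ < M h₁
  simp only [M]
  rw [div_lt_div_iff₀ hD2 hD1]
  rw [div_add' _ _ _ (by positivity : (h₂ * μ) ≠ 0),
      div_add' _ _ _ (by positivity : (h₁ * μ) ≠ 0),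
      div_mul_eq_mul_div, div_mul_eq_mul_div,
      div_lt_div_iff₀ (by positivity) (by positivity)]
  have hfac : ((1 + 4 * h₁ * L * α * (h₁ * μ)) * (ρ - 4 * h₂ * L * α * (1 + ρ))) * (h₂ * μ)
      - ((1 + 4 * h₂ * L * α * (h₂ * μ)) * (ρ - 4 * h₁ * L * α * (1 + ρ))) * (h₁ * μ)
      = (h₂ - h₁) * μ * ρ * (1 - 4 * μ * α * L * (h₁ * h₂ + a * (h₁ + h₂))) := by
    have h1ρ : (1:ℝ) + ρ = a * (ρ * μ) := haμρ.symm
    rw [h1ρ]; ring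
  linarith [hfac, mul_pos (mul_pos (mul_pos (sub_pos.2 h12) hμ) hρ0) hkey]
end

section
/- Let μ > 0, L > 0, α > 0, and ρ ∈ (0, 1) with ρ − 4α(1 + ρ) > 0, and define h̃ = sqrt( ((1 + ρ)/(ρμ))² + 1/(4μαL) ) − (1 + ρ)/(ρμ) and M(h) = (1/(hμ) + 4hLα)/(ρ − 4hLα(1 + ρ)). If h̃ ≥ 1/L, then the constrained minimum of M over h ∈ (0, 1/L] is attained at h = 1/L, and its value is M(1/L) = (L/μ + 4α)/(ρ − 4α(1 + ρ)); i.e., M(h) ≥ (L/μ + 4α)/(ρ − 4α(1 + ρ)) for all h ∈ (0, 1/L]. -/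
set_option maxHeartbeats 800000


/-- If `ρ − 4α(1+ρ) > 0` and the unconstrained optimal stepsize
`h̃ = sqrt(((1+ρ)/(ρμ))² + 1/(4μαL)) − (1+ρ)/(ρμ)` satisfies `h̃ ≥ 1/L`, then the
constrained minimum of `M(h) = (1/(hμ) + 4hLα)/(ρ − 4hLα(1+ρ))` over `h ∈ (0, 1/L]` is
attained at `h = 1/L` with value `(L/μ + 4α)/(ρ − 4α(1+ρ))`. -/
theorem mS2GD_constrained_optimal_stepsize (μ L α ρ : ℝ)
    (hμ : 0 < μ) (hL : 0 < L) (hα : 0 < α) (hρ0 : 0 < ρ) (hρ1 : ρ < 1)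
    (hfeas : 0 < ρ - 4 * α * (1 + ρ))
    (hht : 1 / L ≤ Real.sqrt (((1 + ρ) / (ρ * μ)) ^ 2 + 1 / (4 * μ * α * L))
            - (1 + ρ) / (ρ * μ)) :
    let M : ℝ → ℝ := fun h => (1 / (h * μ) + 4 * h * L * α) / (ρ - 4 * h * L * α * (1 + ρ))
    (∀ h : ℝ, 0 < h → h ≤ 1 / L → M (1 / L) ≤ M h) ∧
    M (1 / L) = (L / μ + 4 * α) / (ρ - 4 * α * (1 + ρ)) := by
  intro M
  have hA : (0:ℝ) ≤ ((1 + ρ) / (ρ * μ)) ^ 2 + 1 / (4 * μ * α * L) := by positivity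
  have hsq : (1 / L + (1 + ρ) / (ρ * μ)) ^ 2 ≤
      ((1 + ρ) / (ρ * μ)) ^ 2 + 1 / (4 * μ * α * L) := by
    have h1 : 1 / L + (1 + ρ) / (ρ * μ) ≤
        Real.sqrt (((1 + ρ) / (ρ * μ)) ^ 2 + 1 / (4 * μ * α * L)) := by linarith
    have h2 : (0:ℝ) ≤ 1 / L + (1 + ρ) / (ρ * μ) := by positivity
    calc (1 / L + (1 + ρ) / (ρ * μ)) ^ 2
        ≤ Real.sqrt (((1 + ρ) / (ρ * μ)) ^ 2 + 1 / (4 * μ * α * L)) ^ 2 :=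
          pow_le_pow_left₀ h2 h1 2
      _ = ((1 + ρ) / (ρ * μ)) ^ 2 + 1 / (4 * μ * α * L) := Real.sq_sqrt hA
  have h3 : (1 / L) ^ 2 + 2 * ((1 + ρ) / (ρ * μ)) * (1 / L) ≤ 1 / (4 * μ * α * L) := by
    nlinarith [hsq]
  have key : 4 * α * ρ * μ + 8 * α * L * (1 + ρ) ≤ ρ * L := by
    have hpos : (0:ℝ) ≤ 4 * μ * α * L * L * ρ := by positivity
    have h4 := mul_le_mul_of_nonneg_left h3 hpos
    have e1 : 4 * μ * α * L * L * ρ * ((1 / L) ^ 2 + 2 * ((1 + ρ) / (ρ * μ)) * (1 / L))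
        = 4 * α * ρ * μ + 8 * α * L * (1 + ρ) := by
      field_simp; ring
    have e2 : 4 * μ * α * L * L * ρ * (1 / (4 * μ * α * L)) = ρ * L := by
      field_simp
    rw [e1, e2] at h4
    exact h4
  have hMval : M (1 / L) = (L / μ + 4 * α) / (ρ - 4 * α * (1 + ρ)) := by
    show (1 / (1 / L * μ) + 4 * (1 / L) * L * α) / (ρ - 4 * (1 / L) * L * α * (1 + ρ))
        = (L / μ + 4 * α) / (ρ - 4 * α * (1 + ρ))
    field_simp
  refine ⟨?_, hMval⟩
  intro h hh hhL
  have hhL' : h * L ≤ 1 := by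
    have := mul_le_mul_of_nonneg_right hhL (le_of_lt hL)
    have hL0 : L ≠ 0 := ne_of_gt hL
    calc h * L ≤ 1 / L * L := this
      _ = 1 := by field_simp
  rw [hMval]
  have hstep : 4 * h * L * α * (1 + ρ) ≤ 4 * α * (1 + ρ) := by
    have := mul_le_mul_of_nonneg_right hhL' (show (0:ℝ) ≤ 4 * α * (1 + ρ) by positivity)
    nlinarith [this]
  have hDh : 0 < ρ - 4 * h * L * α * (1 + ρ) := by linarith
  show (L / μ + 4 * α) / (ρ - 4 * α * (1 + ρ)) ≤
      (1 / (h * μ) + 4 * h * L * α) / (ρ - 4 * h * L * α * (1 + ρ))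
  rw [div_le_div_iff₀ hfeas hDh]
  have hhμ : (0:ℝ) < h * μ := by positivity
  rw [← mul_le_mul_iff_of_pos_right hhμ]
  have lhs_eq : (L / μ + 4 * α) * (ρ - 4 * h * L * α * (1 + ρ)) * (h * μ)
      = h * L * ρ + 4 * h * α * ρ * μ - 4 * h ^ 2 * L ^ 2 * α * (1 + ρ)
        - 16 * h ^ 2 * L * α ^ 2 * (1 + ρ) * μ := by
    field_simp; ring
  have rhs_eq : (1 / (h * μ) + 4 * h * L * α) * (ρ - 4 * α * (1 + ρ)) * (h * μ)
      = ρ - 4 * α * (1 + ρ) + 4 * h ^ 2 * L * α * ρ * μ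
        - 16 * h ^ 2 * L * α ^ 2 * (1 + ρ) * μ := by
    field_simp; ring
  rw [lhs_eq, rhs_eq]
  -- difference = (1 - hL)·(ρ - 4α(1+ρ)(1+hL) - 4hαρμ) ≥ 0
  have bracket : 0 ≤ ρ - 4 * α * (1 + ρ) * (1 + h * L) - 4 * h * α * ρ * μ := by
    have hLX : L * 0 ≤ L * (ρ - 4 * α * (1 + ρ) * (1 + h * L) - 4 * h * α * ρ * μ) := by
      nlinarith [key,
        mul_nonneg (show (0:ℝ) ≤ 1 - h * L by linarith)
          (show (0:ℝ) ≤ 4 * α * L * (1 + ρ) by positivity),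
        mul_nonneg (show (0:ℝ) ≤ 1 - h * L by linarith)
          (show (0:ℝ) ≤ 4 * α * ρ * μ by positivity)]
    exact le_of_mul_le_mul_left (by linarith [hLX]) hL
  nlinarith [mul_nonneg (show (0:ℝ) ≤ 1 - h * L by linarith) bracket]
end
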